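/- Let I = [a,b] ⊂ (0,1), and let {q_n} be a sequence of polynomials of degree m_n whose roots ξ_{1,n},…,ξ_{m_n,n} all lie in the open unit disk and satisfy ∑_{j=1}^{m_n} (π − ∠(ξ_{j,n}, I)) ≤ C with C independent of n. Then for every ε > 0 there exists an integer l such that, for all n large enough, there is a polynomial T_{l,n} of degree at most l with |q̃_n(x)/|q̃_n(x)| − T_{l,n}(x)| < ε for all x ∈ I, where q̃_n(z) := z^{m_n} · conj(q_n(1/z̄)) is the reciprocal polynomial of q_n. -/

import Mathlib

open Set

open scoped Polynomial

/-- Principal argument with the convention `Arg 0 = π`. -/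
noncomputable def arg' (z : ℂ) : ℝ := if z = 0 then Real.pi else Complex.arg z

/-- Angle under which the real interval `[a,b]` is seen from `ξ`. -/
noncomputable def ang (ξ : ℂ) (a b : ℝ) : ℝ := |arg' ((a : ℂ) - ξ) - arg' ((b : ℂ) - ξ)|

/-- Reciprocal polynomial `q̃(z) = z^{deg q} conj(q(1/z̄))`, as a function. -/
noncomputable def recipPoly (q : Polynomial ℂ) (z : ℂ) : ℂ :=
  z ^ q.natDegree * (starRingEnd ℂ) (Polynomial.eval (1 / (starRingEnd ℂ) z) q)

local notation "conj'" => starRingEnd ℂ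

/-! ### Auxiliary geometric lemmas about arguments -/

lemma arg_upper (z : ℂ) (hz : 0 < z.im) (h2 : ‖z‖ ≤ 2) :
    0 < z.arg ∧ z.arg ≤ Real.pi - z.im / 2 := by
  have hz0 : z ≠ 0 := fun h => by simp [h] at hz
  have habs : 0 < ‖z‖ := norm_pos_iff.mpr hz0
  have hargpos : 0 < z.arg := by
    rcases lt_trichotomy z.arg 0 with h | h | h
    · exact absurd (Complex.arg_neg_iff.1 h) (by linarith)
    · exact absurd (Complex.arg_eq_zero_iff.1 h).2 (by linarith)
    · exact h
  refine ⟨hargpos, ?_⟩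
  have hle : z.arg ≤ Real.pi := Complex.arg_le_pi z
  have hsin : Real.sin (Real.pi - z.arg) = z.im / ‖z‖ := by
    rw [Real.sin_pi_sub, Complex.sin_arg]
  have h3 : z.im / 2 ≤ Real.sin (Real.pi - z.arg) := by
    rw [hsin]; exact div_le_div_of_nonneg_left hz.le habs h2
  have h4 : Real.sin (Real.pi - z.arg) ≤ Real.pi - z.arg := Real.sin_le (by linarith)
  linarith

lemma ang_le (ξ : ℂ) (a b : ℝ) (ha : 0 < a) (ha1 : a < 1) (hb0 : 0 < b) (hb1 : b < 1)
    (hξ : ‖ξ‖ < 1) : ang ξ a b ≤ Real.pi - |ξ.im| / 2 := by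
  have habs2 : ∀ c : ℝ, 0 < c → c < 1 → ‖(c:ℂ) - ξ‖ ≤ 2 := by
    intro c hc hc1
    calc ‖(c:ℂ) - ξ‖ ≤ ‖(c:ℂ)‖ + ‖ξ‖ :=
          norm_sub_le _ _
      _ ≤ 2 := by
          rw [Complex.norm_real, Real.norm_eq_abs, abs_of_pos hc]
          have : ‖ξ‖ < 1 := hξ
          linarith
  rcases lt_trichotomy ξ.im 0 with him | him | him
  · have key : ∀ c : ℝ, 0 < c → c < 1 →
        0 < arg' ((c:ℂ) - ξ) ∧ arg' ((c:ℂ) - ξ) ≤ Real.pi - (-ξ.im) / 2 := by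
      intro c hc hc1
      have him' : 0 < ((c:ℂ) - ξ).im := by simp [Complex.sub_im]; linarith
      have hne : (c:ℂ) - ξ ≠ 0 := fun h => by rw [h] at him'; simp at him'
      have := arg_upper _ him' (habs2 c hc hc1)
      rw [arg', if_neg hne]
      simpa [Complex.sub_im, Complex.ofReal_im] using this
    obtain ⟨h1, h2⟩ := key a ha ha1
    obtain ⟨h3, h4⟩ := key b hb0 hb1
    rw [ang, abs_of_neg him, abs_sub_le_iff]
    constructor <;> linarith
  · have harg : ∀ c : ℝ, 0 ≤ arg' ((c:ℂ) - ξ) ∧ arg' ((c:ℂ) - ξ) ≤ Real.pi := by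
      intro c
      by_cases h : (c:ℂ) - ξ = 0
      · simp [arg', h, Real.pi_nonneg]
      · rw [arg', if_neg h]
        refine ⟨?_, Complex.arg_le_pi _⟩
        have heq : (c:ℂ) - ξ = ((c - ξ.re : ℝ) : ℂ) := by
          apply Complex.ext <;> simp [him]
        rw [heq]
        rcases le_or_gt 0 (c - ξ.re) with hr | hr
        · rw [Complex.arg_ofReal_of_nonneg hr]
        · rw [Complex.arg_ofReal_of_neg hr]; exact Real.pi_nonneg
    obtain ⟨p1, p2⟩ := harg a
    obtain ⟨p3, p4⟩ := harg b
    rw [ang, him]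
    simp only [abs_zero]
    rw [abs_sub_le_iff]
    constructor <;> linarith
  · have key : ∀ c : ℝ, 0 < c → c < 1 →
        -(Real.pi - ξ.im / 2) ≤ arg' ((c:ℂ) - ξ) ∧ arg' ((c:ℂ) - ξ) < 0 := by
      intro c hc hc1
      have him' : ((c:ℂ) - ξ).im < 0 := by simp [Complex.sub_im]; linarith
      have hne : (c:ℂ) - ξ ≠ 0 := fun h => by rw [h] at him'; simp at him'
      have himc : 0 < ((starRingEnd ℂ) ((c:ℂ) - ξ)).im := by
        simp [Complex.conj_im]; linarith
      have habsc : ‖(starRingEnd ℂ) ((c:ℂ) - ξ)‖ ≤ 2 := by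
        rw [Complex.norm_conj]; exact habs2 c hc hc1
      obtain ⟨k1, k2⟩ := arg_upper _ himc habsc
      have hargc : ((starRingEnd ℂ) ((c:ℂ) - ξ)).arg = -((c:ℂ) - ξ).arg := by
        rw [Complex.arg_conj, if_neg]
        intro hp
        exact absurd (Complex.arg_eq_pi_iff.1 hp).2 (by linarith)
      rw [hargc] at k1 k2
      have hc2 : ((starRingEnd ℂ) ((c:ℂ) - ξ)).im = ξ.im := by
        simp [Complex.conj_im, Complex.sub_im]
      rw [hc2] at k2
      rw [arg', if_neg hne]
      exact ⟨by linarith, Complex.arg_neg_iff.2 him'⟩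
    obtain ⟨h1, h2⟩ := key a ha ha1
    obtain ⟨h3, h4⟩ := key b hb0 hb1
    rw [ang, abs_of_pos him, abs_sub_le_iff]
    constructor <;> linarith

/-! ### Unimodular difference estimates -/

lemma unit_diff (U V : ℂ) (hU : ‖U‖ = 1) (hV : ‖V‖ = 1) (h : 0 ≤ (U * conj' V).re) :
    ‖U - V‖ ≤ 2 * |(U * conj' V).im| := by
  have hnsU : Complex.normSq U = 1 := by
    rw [Complex.normSq_eq_norm_sq, hU]; norm_num
  have hnsV : Complex.normSq V = 1 := by
    rw [Complex.normSq_eq_norm_sq, hV]; norm_num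
  have hW : Complex.normSq (U * conj' V) = 1 := by
    rw [Complex.normSq_mul, Complex.normSq_conj, hnsU, hnsV]; norm_num
  set r := (U * conj' V).re with hr
  set t := (U * conj' V).im with ht
  have hrt : r^2 + t^2 = 1 := by
    rw [← hW, Complex.normSq_apply]; ring
  have hsub : ‖U - V‖^2 = 2 - 2*r := by
    have e : ‖U - V‖^2 = Complex.normSq (U - V) := by
      rw [Complex.sq_norm]
    rw [e, Complex.normSq_sub, hnsU, hnsV, ← hr]; ring
  have h1 : ‖U - V‖^2 ≤ (2*|t|)^2 := by
    rw [hsub]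
    have := abs_nonneg t
    nlinarith [sq_abs t]
  exact (pow_le_pow_iff_left₀ (norm_nonneg _) (by positivity) two_ne_zero).1 h1

lemma norm_div_sub_div (u v : ℂ) (hu : u ≠ 0) (hv : v ≠ 0) (hre : 0 ≤ (u * conj' v).re) :
    ‖u/(‖u‖:ℂ) - v/(‖v‖:ℂ)‖ ≤ 2 * |(u * conj' v).im| / (‖u‖ * ‖v‖) := by
  have hnu : (0:ℝ) < ‖u‖ := norm_pos_iff.2 hu
  have hnv : (0:ℝ) < ‖v‖ := norm_pos_iff.2 hv
  have hU : ‖u/(‖u‖:ℂ)‖ = 1 := by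
    rw [norm_div, Complex.norm_real, Real.norm_eq_abs, abs_of_pos hnu, div_self hnu.ne']
  have hV : ‖v/(‖v‖:ℂ)‖ = 1 := by
    rw [norm_div, Complex.norm_real, Real.norm_eq_abs, abs_of_pos hnv, div_self hnv.ne']
  have hprod : (u/(‖u‖:ℂ)) * conj' (v/(‖v‖:ℂ)) = (u * conj' v) / ((‖u‖ * ‖v‖ : ℝ):ℂ) := by
    rw [map_div₀, Complex.conj_ofReal]
    push_cast
    field_simp
  have key := unit_diff _ _ hU hV (by
    rw [hprod, Complex.div_ofReal_re]
    positivity)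
  rw [hprod, Complex.div_ofReal_im] at key
  calc ‖u/(‖u‖:ℂ) - v/(‖v‖:ℂ)‖ ≤ 2 * |(u * conj' v).im / (‖u‖ * ‖v‖)| := key
    _ = 2 * |(u * conj' v).im| / (‖u‖ * ‖v‖) := by
        rw [abs_div, abs_of_pos (by positivity : (0:ℝ) < ‖u‖ * ‖v‖)]
        ring

/-! ### Products of unimodular factors -/

lemma prod_norm_le_one (s : Multiset ℂ) (h : ∀ z ∈ s, ‖z‖ ≤ 1) : ‖s.prod‖ ≤ 1 := by
  induction s using Multiset.induction_on with
  | empty => simp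
  | cons a t ih =>
    rw [Multiset.prod_cons, norm_mul]
    have h1 := h a (Multiset.mem_cons_self a t)
    have h2 : ‖t.prod‖ ≤ 1 := ih fun z hz => h z (Multiset.mem_cons_of_mem hz)
    calc ‖a‖ * ‖t.prod‖ ≤ 1 * 1 := mul_le_mul h1 h2 (norm_nonneg _) zero_le_one
      _ = 1 := one_mul 1

lemma prod_diff (s : Multiset ℂ) (f g : ℂ → ℂ)
    (hf : ∀ ξ ∈ s, ‖f ξ‖ ≤ 1) (hg : ∀ ξ ∈ s, ‖g ξ‖ ≤ 1) :
    ‖(s.map f).prod - (s.map g).prod‖ ≤ ((s.map fun ξ => ‖f ξ - g ξ‖).sum) := by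
  induction s using Multiset.induction_on with
  | empty => simp
  | cons a t ih =>
    simp only [Multiset.map_cons, Multiset.prod_cons, Multiset.sum_cons]
    have hPf : ‖(t.map f).prod‖ ≤ 1 := by
      apply prod_norm_le_one
      intro z hz
      obtain ⟨ξ, hξ, rfl⟩ := Multiset.mem_map.1 hz
      exact hf ξ (Multiset.mem_cons_of_mem hξ)
    have hga : ‖g a‖ ≤ 1 := hg a (Multiset.mem_cons_self a t)
    have ih' := ih (fun ξ hξ => hf ξ (Multiset.mem_cons_of_mem hξ))
      (fun ξ hξ => hg ξ (Multiset.mem_cons_of_mem hξ))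
    calc ‖f a * (t.map f).prod - g a * (t.map g).prod‖
        = ‖(f a - g a) * (t.map f).prod + g a * ((t.map f).prod - (t.map g).prod)‖ := by
          ring_nf
      _ ≤ ‖(f a - g a) * (t.map f).prod‖ + ‖g a * ((t.map f).prod - (t.map g).prod)‖ :=
          norm_add_le _ _
      _ ≤ ‖f a - g a‖ * 1 + 1 * ‖(t.map f).prod - (t.map g).prod‖ := by
          rw [norm_mul, norm_mul]
          gcongr
      _ ≤ ‖f a - g a‖ + ((t.map fun ξ => ‖f ξ - g ξ‖).sum) := by
          rw [one_mul, mul_one]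
          gcongr

/-! ### Factorization of the reciprocal polynomial on the interval -/

lemma recip_eq (q : Polynomial ℂ) (x : ℝ) (hx : x ≠ 0) :
    recipPoly q (x:ℂ) =
      conj' q.leadingCoeff * ((q.roots.map fun ξ => 1 - conj' ξ * (x:ℂ)).prod) := by
  have hsplit := IsAlgClosed.splits q
  have hcard : q.roots.card = q.natDegree := (Polynomial.splits_iff_card_roots).1 hsplit
  have hfact := hsplit.eq_prod_roots
  have hxne : (x:ℂ) ≠ 0 := Complex.ofReal_ne_zero.2 hx
  have heval : conj' (Polynomial.eval (1/(x:ℂ)) q) =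
      conj' q.leadingCoeff * (q.roots.map fun ξ => (1/(x:ℂ) - conj' ξ)).prod := by
    conv_lhs => rw [hfact]
    rw [Polynomial.eval_mul, Polynomial.eval_C, Polynomial.eval_multiset_prod, map_mul,
      map_multiset_prod, Multiset.map_map, Multiset.map_map]
    congr 1
    apply congrArg
    apply Multiset.map_congr rfl
    intro ξ _
    simp only [Function.comp_apply, Polynomial.eval_sub, Polynomial.eval_X, Polynomial.eval_C,
      map_sub, map_div₀, map_one, Complex.conj_ofReal]
  rw [recipPoly, Complex.conj_ofReal, heval]
  have hpow : (x:ℂ) ^ q.natDegree = (q.roots.map fun _ => (x:ℂ)).prod := by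
    rw [Multiset.map_const', Multiset.prod_replicate, hcard]
  rw [hpow, mul_comm ((q.roots.map fun _ => (x:ℂ)).prod), mul_assoc]
  congr 1
  rw [← Multiset.prod_map_mul]
  apply congrArg
  apply Multiset.map_congr rfl
  intro ξ _
  field_simp

lemma norm_mprod (s : Multiset ℂ) : ‖s.prod‖ = (s.map (fun z => ‖z‖)).prod := by
  induction s using Multiset.induction_on with
  | empty => simp
  | cons a t ih => simp [ih]

lemma ofReal_mprod (s : Multiset ℝ) :
    ((s.prod : ℝ) : ℂ) = (Multiset.map (fun r : ℝ => (r : ℂ)) s).prod := by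
  simpa using map_multiset_prod Complex.ofRealHom s

lemma F_split (q : Polynomial ℂ) (x : ℝ) (hx : x ≠ 0) :
    recipPoly q (x:ℂ) / ((‖recipPoly q (x:ℂ)‖:ℝ):ℂ) =
      (conj' q.leadingCoeff / ((‖q.leadingCoeff‖:ℝ):ℂ)) *
        (q.roots.map fun ξ =>
          (1 - conj' ξ * (x:ℂ)) / ((‖1 - conj' ξ * (x:ℂ)‖:ℝ):ℂ)).prod := by
  rw [recip_eq q x hx]
  set c := q.leadingCoeff
  set s := q.roots
  rw [norm_mul, Complex.norm_conj]
  rw [norm_mprod, Multiset.map_map]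
  rw [Complex.ofReal_mul, ofReal_mprod, Multiset.map_map]
  rw [Multiset.prod_map_div, div_mul_div_comm]
  simp [Function.comp]

/-! ### Per-factor Lipschitz estimate -/

lemma factor_est (ξ : ℂ) (hξ : ‖ξ‖ < 1) (b x y : ℝ) (hb1 : b < 1)
    (hx0 : 0 < x) (hxb : x ≤ b) (hy0 : 0 < y) (hyb : y ≤ b) :
    ‖(1 - conj' ξ * (x:ℂ))/((‖1 - conj' ξ * (x:ℂ)‖:ℝ):ℂ)
      - (1 - conj' ξ * (y:ℂ))/((‖1 - conj' ξ * (y:ℂ)‖:ℝ):ℂ)‖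
      ≤ (2/(1-b)^2 * |x - y|) * |ξ.im| := by
  set u := 1 - conj' ξ * (x:ℂ) with hu_def
  set v := 1 - conj' ξ * (y:ℂ) with hv_def
  have h1b : (0:ℝ) < 1 - b := by linarith
  have hnorm : ∀ t : ℝ, 0 < t → t ≤ b → 1 - b ≤ ‖1 - conj' ξ * (t:ℂ)‖ := by
    intro t ht htb
    have h1 : ‖conj' ξ * (t:ℂ)‖ = ‖ξ‖ * t := by
      simp [norm_mul, Complex.norm_conj, Complex.norm_real, abs_of_pos ht]
    have h2 : ‖ξ‖ * t ≤ b := by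
      calc ‖ξ‖ * t ≤ 1 * t := mul_le_mul_of_nonneg_right hξ.le ht.le
        _ = t := one_mul t
        _ ≤ b := htb
    calc 1 - b ≤ 1 - ‖conj' ξ * (t:ℂ)‖ := by rw [h1]; linarith
      _ ≤ ‖(1:ℂ)‖ - ‖conj' ξ * (t:ℂ)‖ := by norm_num
      _ ≤ ‖1 - conj' ξ * (t:ℂ)‖ := norm_sub_norm_le _ _
  have hnu : 1 - b ≤ ‖u‖ := hnorm x hx0 hxb
  have hnv : 1 - b ≤ ‖v‖ := hnorm y hy0 hyb
  have hune : u ≠ 0 := by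
    intro h; rw [h] at hnu; simp at hnu; linarith
  have hvne : v ≠ 0 := by
    intro h; rw [h] at hnv; simp at hnv; linarith
  have him : (u * conj' v).im = (x - y) * ξ.im := by
    simp only [hu_def, hv_def, map_sub, map_one, map_mul, Complex.conj_conj,
      Complex.conj_ofReal, Complex.mul_im, Complex.mul_re, Complex.sub_im, Complex.sub_re,
      Complex.one_re, Complex.one_im, Complex.conj_re, Complex.conj_im,
      Complex.ofReal_re, Complex.ofReal_im]
    ring
  have hre : 0 ≤ (u * conj' v).re := by
    have hexp : (u * conj' v).re = 1 - x*ξ.re - y*ξ.re + (ξ.re^2 + ξ.im^2)*(x*y) := by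
      simp only [hu_def, hv_def, map_sub, map_one, map_mul, Complex.conj_conj,
        Complex.conj_ofReal, Complex.mul_im, Complex.mul_re, Complex.sub_im, Complex.sub_re,
        Complex.one_re, Complex.one_im, Complex.conj_re, Complex.conj_im,
        Complex.ofReal_re, Complex.ofReal_im]
      ring
    have hsq : ξ.re^2 + ξ.im^2 = ‖ξ‖^2 := by
      rw [Complex.sq_norm, Complex.normSq_apply]; ring
    rw [hsq] at hexp
    rw [hexp]
    have hrle : ξ.re ≤ ‖ξ‖ := by
      exact Complex.re_le_norm ξ
    have hm0 : 0 ≤ ‖ξ‖ := norm_nonneg ξ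
    have hfx : 0 ≤ 1 - x*‖ξ‖ := by nlinarith
    have hfy : 0 ≤ 1 - y*‖ξ‖ := by nlinarith
    nlinarith [mul_nonneg hfx hfy,
      mul_nonneg (by linarith : (0:ℝ) ≤ x + y) (by linarith : (0:ℝ) ≤ ‖ξ‖ - ξ.re)]
  have key := norm_div_sub_div u v hune hvne hre
  rw [him] at key
  refine key.trans ?_
  rw [abs_mul]
  have h2 : (1-b)^2 ≤ ‖u‖*‖v‖ := by
    have e : (1-b)^2 = (1-b)*(1-b) := by ring
    rw [e]
    exact mul_le_mul hnu hnv h1b.le (norm_nonneg u)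
  calc 2 * (|x - y| * |ξ.im|) / (‖u‖ * ‖v‖) ≤ 2 * (|x - y| * |ξ.im|) / (1-b)^2 :=
        div_le_div_of_nonneg_left (by positivity) (by positivity) h2
    _ = (2/(1-b)^2 * |x - y|) * |ξ.im| := by ring

/-! ### Global Lipschitz estimate for the normalized reciprocal polynomial -/

lemma F_lip (q : Polynomial ℂ) (b S : ℝ) (hb1 : b < 1)
    (hroots : ∀ ξ ∈ q.roots, ‖ξ‖ < 1)
    (hsum : (q.roots.map fun ξ => |ξ.im|).sum ≤ S)
    (x y : ℝ) (hx0 : 0 < x) (hxb : x ≤ b) (hy0 : 0 < y) (hyb : y ≤ b) :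
    ‖recipPoly q (x:ℂ) / ((‖recipPoly q (x:ℂ)‖:ℝ):ℂ)
      - recipPoly q (y:ℂ) / ((‖recipPoly q (y:ℂ)‖:ℝ):ℂ)‖
      ≤ (2/(1-b)^2 * S) * |x - y| := by
  rw [F_split q x hx0.ne', F_split q y hy0.ne', ← mul_sub, norm_mul]
  have hcnorm : ‖conj' q.leadingCoeff / ((‖q.leadingCoeff‖:ℝ):ℂ)‖ ≤ 1 := by
    rw [norm_div, Complex.norm_conj,
      Complex.norm_real, Real.norm_eq_abs, abs_of_nonneg (norm_nonneg _)]
    exact div_self_le_one _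
  have hunit : ∀ (z : ℂ), ‖z / ((‖z‖:ℝ):ℂ)‖ ≤ 1 := by
    intro z
    rw [norm_div, Complex.norm_real, Real.norm_eq_abs, abs_of_nonneg (norm_nonneg _)]
    exact div_self_le_one _
  have hprod := prod_diff q.roots
    (fun ξ => (1 - conj' ξ * (x:ℂ)) / ((‖1 - conj' ξ * (x:ℂ)‖:ℝ):ℂ))
    (fun ξ => (1 - conj' ξ * (y:ℂ)) / ((‖1 - conj' ξ * (y:ℂ)‖:ℝ):ℂ))
    (fun ξ _ => hunit _) (fun ξ _ => hunit _)
  have hsum2 : ((q.roots.map fun ξ =>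
      ‖(1 - conj' ξ * (x:ℂ)) / ((‖1 - conj' ξ * (x:ℂ)‖:ℝ):ℂ)
        - (1 - conj' ξ * (y:ℂ)) / ((‖1 - conj' ξ * (y:ℂ)‖:ℝ):ℂ)‖).sum)
      ≤ ((q.roots.map fun ξ => (2/(1-b)^2 * |x - y|) * |ξ.im|).sum) := by
    apply Multiset.sum_map_le_sum_map
    intro ξ hξ
    exact factor_est ξ (hroots ξ hξ) b x y hb1 hx0 hxb hy0 hyb
  have hsum3 : ((q.roots.map fun ξ => (2/(1-b)^2 * |x - y|) * |ξ.im|).sum)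
      ≤ (2/(1-b)^2 * |x - y|) * S := by
    rw [Multiset.sum_map_mul_left]
    have h1b : (0:ℝ) < 1 - b := by linarith
    exact mul_le_mul_of_nonneg_left hsum (by positivity)
  calc ‖conj' q.leadingCoeff / ((‖q.leadingCoeff‖:ℝ):ℂ)‖ * ‖_ - _‖
      ≤ 1 * ((2/(1-b)^2 * |x - y|) * S) :=
        mul_le_mul hcnorm (hprod.trans (hsum2.trans hsum3)) (norm_nonneg _) zero_le_one
    _ = (2/(1-b)^2 * S) * |x - y| := by ring

/-! ### Quantitative Bernstein approximation -/

lemma bernstein_est (f : ℝ → ℂ) (L : ℝ) (hL : 0 ≤ L)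
    (hf : ∀ s t : ℝ, s ∈ Icc (0:ℝ) 1 → t ∈ Icc (0:ℝ) 1 → ‖f s - f t‖ ≤ L * |s - t|)
    (M : ℕ) (hM : 0 < M) (δ : ℝ) (hδ : 0 < δ) (t : ℝ) (ht : t ∈ Icc (0:ℝ) 1) :
    ‖(∑ k ∈ Finset.range (M+1),
        f (k/M) * ((Polynomial.eval t (bernsteinPolynomial ℝ M k) : ℝ):ℂ)) - f t‖
      ≤ L * (δ/2 + 1/(8*δ*M)) := by
  set B : ℕ → ℝ := fun k => Polynomial.eval t (bernsteinPolynomial ℝ M k) with hB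
  have hMR : (0:ℝ) < M := by exact_mod_cast hM
  have hpos : ∀ k, 0 ≤ B k := by
    intro k
    simp only [hB, bernsteinPolynomial, Polynomial.eval_mul, Polynomial.eval_pow,
      Polynomial.eval_sub, Polynomial.eval_one, Polynomial.eval_X, Polynomial.eval_natCast]
    have h1 := ht.1; have h2 := ht.2
    apply mul_nonneg (mul_nonneg (by positivity) (pow_nonneg h1 _))
    exact pow_nonneg (by linarith) _
  have hsum : ∑ k ∈ Finset.range (M+1), B k = 1 := by
    simp only [hB]
    rw [← Polynomial.eval_finset_sum, bernsteinPolynomial.sum, Polynomial.eval_one]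
  have hvar : ∑ k ∈ Finset.range (M+1), ((M:ℝ)*t - k)^2 * B k = (M:ℝ)*t*(1-t) := by
    have := congrArg (Polynomial.eval t) (bernsteinPolynomial.variance (R := ℝ) M)
    simpa [Polynomial.eval_finset_sum, nsmul_eq_mul] using this
  have hvar2 : ∑ k ∈ Finset.range (M+1), (t - k/M)^2 * B k = t*(1-t)/M := by
    have : ∀ k : ℕ, (t - (k:ℝ)/M)^2 * B k = (1/M^2) * (((M:ℝ)*t - k)^2 * B k) := by
      intro k
      have e : t - (k:ℝ)/M = ((M:ℝ)*t - k)/M := by field_simp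
      rw [e, div_pow]
      field_simp
    rw [Finset.sum_congr rfl (fun k _ => this k), ← Finset.mul_sum, hvar]
    field_simp
  have hnode : ∀ k ∈ Finset.range (M+1), ((k:ℝ)/M) ∈ Icc (0:ℝ) 1 := by
    intro k hk
    constructor
    · positivity
    · rw [div_le_one hMR]
      exact_mod_cast Nat.lt_succ_iff.1 (Finset.mem_range.1 hk)
  have hsumC : (∑ k ∈ Finset.range (M+1), ((B k : ℝ):ℂ)) = 1 := by
    exact_mod_cast congrArg (fun r : ℝ => (r:ℂ)) hsum
  have step1 : (∑ k ∈ Finset.range (M+1),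
      f (k/M) * ((B k : ℝ):ℂ)) - f t
      = ∑ k ∈ Finset.range (M+1), (f (k/M) - f t) * ((B k : ℝ):ℂ) := by
    have e : ∑ k ∈ Finset.range (M+1), (f (k/M) - f t) * ((B k : ℝ):ℂ)
        = (∑ k ∈ Finset.range (M+1), f (k/M) * ((B k : ℝ):ℂ))
          - f t * ∑ k ∈ Finset.range (M+1), ((B k : ℝ):ℂ) := by
      rw [Finset.mul_sum, ← Finset.sum_sub_distrib]
      exact Finset.sum_congr rfl (fun k _ => by ring)
    rw [e, hsumC, mul_one]
  have hptwise : ∀ k ∈ Finset.range (M+1),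
      ‖(f (k/M) - f t) * ((B k : ℝ):ℂ)‖
        ≤ (L*(δ/2) * B k + L/(2*δ) * ((t - k/M)^2 * B k)) := by
    intro k hk
    rw [norm_mul, Complex.norm_real, Real.norm_eq_abs, abs_of_nonneg (hpos k)]
    have h1 : ‖f (k/M) - f t‖ ≤ L * |(k:ℝ)/M - t| := hf _ _ (hnode k hk) ht
    have h2 : |(k:ℝ)/M - t| ≤ δ/2 + (t - k/M)^2/(2*δ) := by
      have key : 2*δ*|(k:ℝ)/M - t| ≤ δ^2 + (t - (k:ℝ)/M)^2 := by
        nlinarith [sq_nonneg (|(k:ℝ)/M - t| - δ), sq_abs ((k:ℝ)/M - t)]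
      have e : δ/2 + (t - (k:ℝ)/M)^2/(2*δ) = (δ^2 + (t - (k:ℝ)/M)^2)/(2*δ) := by
        field_simp
      rw [e, le_div_iff₀ (by positivity : (0:ℝ) < 2*δ)]
      linarith [key]
    calc ‖f (k/M) - f t‖ * B k ≤ (L * (δ/2 + (t - k/M)^2/(2*δ))) * B k := by
          apply mul_le_mul_of_nonneg_right _ (hpos k)
          exact h1.trans (mul_le_mul_of_nonneg_left h2 hL)
      _ = L*(δ/2) * B k + L/(2*δ) * ((t - k/M)^2 * B k) := by ring
  calc ‖(∑ k ∈ Finset.range (M+1), f (k/M) * ((B k : ℝ):ℂ)) - f t‖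
      = ‖∑ k ∈ Finset.range (M+1), (f (k/M) - f t) * ((B k : ℝ):ℂ)‖ := by rw [step1]
    _ ≤ ∑ k ∈ Finset.range (M+1), ‖(f (k/M) - f t) * ((B k : ℝ):ℂ)‖ := norm_sum_le _ _
    _ ≤ ∑ k ∈ Finset.range (M+1), (L*(δ/2) * B k + L/(2*δ) * ((t - k/M)^2 * B k)) :=
        Finset.sum_le_sum hptwise
    _ = L*(δ/2) * (∑ k ∈ Finset.range (M+1), B k)
        + L/(2*δ) * (∑ k ∈ Finset.range (M+1), (t - k/M)^2 * B k) := by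
        rw [Finset.sum_add_distrib, ← Finset.mul_sum, ← Finset.mul_sum]
    _ = L*(δ/2) + L/(2*δ) * (t*(1-t)/M) := by rw [hsum, hvar2, mul_one]
    _ ≤ L * (δ/2 + 1/(8*δ*M)) := by
        have ht1 := ht.1; have ht2 := ht.2
        have h4 : t*(1-t) ≤ 1/4 := by nlinarith [sq_nonneg (t - 1/2)]
        have h5 : L/(2*δ) * (t*(1-t)/M) ≤ L/(2*δ) * (1/(4*M)) := by
          apply mul_le_mul_of_nonneg_left _ (by positivity)
          rw [div_le_div_iff₀ hMR (by positivity)]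
          nlinarith [mul_le_mul_of_nonneg_right h4 (le_of_lt hMR)]
        calc L*(δ/2) + L/(2*δ) * (t*(1-t)/M) ≤ L*(δ/2) + L/(2*δ) * (1/(4*M)) := by linarith
          _ = L * (δ/2 + 1/(8*δ*M)) := by field_simp; ring

/-! ### Construction of the approximating polynomial -/

lemma bern_natDegree (n ν : ℕ) (hν : ν ≤ n) : (bernsteinPolynomial ℂ n ν).natDegree ≤ n := by
  rw [bernsteinPolynomial]
  apply Polynomial.natDegree_mul_le.trans
  have h1 : ((Nat.choose n ν : ℂ[X]) * Polynomial.X ^ ν).natDegree ≤ ν := by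
    apply Polynomial.natDegree_mul_le.trans
    simp [Polynomial.natDegree_natCast, Polynomial.natDegree_X_pow]
  have h2 : ((1 - Polynomial.X : ℂ[X]) ^ (n - ν)).natDegree ≤ n - ν := by
    apply Polynomial.natDegree_pow_le.trans
    have : (1 - Polynomial.X : ℂ[X]).natDegree ≤ 1 := by
      apply (Polynomial.natDegree_sub_le _ _).trans
      simp
    calc (n-ν) * (1 - Polynomial.X : ℂ[X]).natDegree ≤ (n-ν) * 1 :=
          Nat.mul_le_mul_left _ this
      _ = n - ν := Nat.mul_one _
  omega

lemma bern_eval (n ν : ℕ) (t : ℝ) :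
    Polynomial.eval ((t:ℝ):ℂ) (bernsteinPolynomial ℂ n ν)
      = ((Polynomial.eval t (bernsteinPolynomial ℝ n ν) : ℝ) : ℂ) := by
  simp only [bernsteinPolynomial, Polynomial.eval_mul, Polynomial.eval_pow,
    Polynomial.eval_sub, Polynomial.eval_one, Polynomial.eval_X, Polynomial.eval_natCast]
  push_cast
  ring

lemma exists_T (g : ℝ → ℂ) (M : ℕ) (hM : 0 < M) (a b : ℝ) (hba : a < b) :
    ∃ T : Polynomial ℂ, T.natDegree ≤ M ∧ ∀ x : ℝ, Polynomial.eval (x:ℂ) T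
      = ∑ k ∈ Finset.range (M+1), g ((k:ℝ)/M)
          * ((Polynomial.eval ((x-a)/(b-a)) (bernsteinPolynomial ℝ M k) : ℝ):ℂ) := by
  refine ⟨(∑ k ∈ Finset.range (M+1),
      Polynomial.C (g ((k:ℝ)/M)) * bernsteinPolynomial ℂ M k).comp
      (Polynomial.C ((((b-a)⁻¹ : ℝ)):ℂ) * (Polynomial.X - Polynomial.C ((a:ℝ):ℂ))), ?_, ?_⟩
  · apply Polynomial.natDegree_comp_le.trans
    have h1 : (∑ k ∈ Finset.range (M+1),
        Polynomial.C (g ((k:ℝ)/M)) * bernsteinPolynomial ℂ M k).natDegree ≤ M := by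
      apply Polynomial.natDegree_sum_le_of_forall_le
      intro k hk
      apply Polynomial.natDegree_mul_le.trans
      have := bern_natDegree M k (Nat.lt_succ_iff.1 (Finset.mem_range.1 hk))
      simp only [Polynomial.natDegree_C, zero_add]
      exact this
    have h2 : (Polynomial.C ((((b-a)⁻¹ : ℝ)):ℂ) *
        (Polynomial.X - Polynomial.C ((a:ℝ):ℂ))).natDegree ≤ 1 := by
      apply Polynomial.natDegree_mul_le.trans
      simp [Polynomial.natDegree_X_sub_C]
    calc _ ≤ M * 1 := Nat.mul_le_mul h1 h2
      _ = M := Nat.mul_one M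
  · intro x
    rw [Polynomial.eval_comp]
    have hx : Polynomial.eval (x:ℂ)
        (Polynomial.C ((((b-a)⁻¹ : ℝ)):ℂ) * (Polynomial.X - Polynomial.C ((a:ℝ):ℂ)))
        = (((x-a)/(b-a) : ℝ) : ℂ) := by
      simp only [Polynomial.eval_mul, Polynomial.eval_sub, Polynomial.eval_X, Polynomial.eval_C]
      push_cast
      ring
    rw [hx, Polynomial.eval_finset_sum]
    apply Finset.sum_congr rfl
    intro k hk
    rw [Polynomial.eval_mul, Polynomial.eval_C, bern_eval]

/-- if the zeros `ξ_{j,n}` of `q_n` lie in the open unit disk and satisfy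
`∑_j (π - ∠(ξ_{j,n}, I)) ≤ C` with `I = [a,b] ⊂ (0,1)`, then for every `ε > 0` there is an
integer `l` such that for all large `n` there exists a polynomial `T` of degree at most `l`
approximating `q̃_n/|q̃_n|` within `ε` uniformly on `I`. -/
theorem stmt5 (a b : ℝ) (ha : 0 < a) (hab : a ≤ b) (hb : b < 1)
    (q : ℕ → Polynomial ℂ) (hq0 : ∀ n, q n ≠ 0)
    (hroots : ∀ n, ∀ ξ ∈ (q n).roots, ‖ξ‖ < 1)
    (C : ℝ)
    (hang : ∀ n, ((q n).roots.map (fun ξ => Real.pi - ang ξ a b)).sum ≤ C) :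
    ∀ ε > 0, ∃ l : ℕ, ∃ N : ℕ, ∀ n ≥ N, ∃ T : Polynomial ℂ, T.natDegree ≤ l ∧
      ∀ x ∈ Icc a b,
        ‖recipPoly (q n) (x : ℂ) / (‖recipPoly (q n) (x : ℂ)‖ : ℂ)
          - Polynomial.eval (x : ℂ) T‖ < ε := by
  intro ε hε
  have ha1 : a < 1 := lt_of_le_of_lt hab hb
  have hb0 : 0 < b := lt_of_lt_of_le ha hab
  have h1b : (0:ℝ) < 1 - b := by linarith
  have hC0 : 0 ≤ C := by
    refine le_trans ?_ (hang 0)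
    apply Multiset.sum_nonneg
    intro t ht
    obtain ⟨ξ, hξ, rfl⟩ := Multiset.mem_map.1 ht
    have h1 := ang_le ξ a b ha ha1 hb0 hb (hroots 0 ξ hξ)
    have h2 : 0 ≤ |ξ.im| := abs_nonneg _
    linarith
  set L : ℝ := 2/(1-b)^2 * (2*C) with hLdef
  have hL0 : 0 ≤ L := mul_nonneg (by positivity) (by linarith)
  rcases eq_or_lt_of_le hab with heq | hba
  · -- degenerate case a = b : the interval is a point
    refine ⟨0, 0, fun n _ => ⟨Polynomial.C
      (recipPoly (q n) ((a:ℝ):ℂ) / ((‖recipPoly (q n) ((a:ℝ):ℂ)‖:ℝ):ℂ)),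
      le_of_eq (Polynomial.natDegree_C _), ?_⟩⟩
    intro x hx
    have hxa : x = a := le_antisymm (heq ▸ hx.2) hx.1
    subst hxa
    rw [Polynomial.eval_C, sub_self, norm_zero]
    exact hε
  · have hba1 : b - a ≤ 1 := by linarith
    have hL1 : (0:ℝ) < L + 1 := by linarith
    clear_value L
    obtain ⟨δ, hδdef⟩ : ∃ δ : ℝ, δ = ε/(2*(L+1)) := ⟨_, rfl⟩
    have hδ : 0 < δ := by rw [hδdef]; exact div_pos hε (by linarith)
    obtain ⟨M, hMdef⟩ : ∃ M : ℕ, M = ⌈L/(4*δ*ε)⌉₊ + 1 := ⟨_, rfl⟩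
    have hM0 : 0 < M := by rw [hMdef]; exact Nat.succ_pos _
    have hMb : L/(4*δ*ε) < M := by
      calc L/(4*δ*ε) ≤ (⌈L/(4*δ*ε)⌉₊ : ℝ) := Nat.le_ceil _
        _ < M := by rw [hMdef]; exact_mod_cast Nat.lt_succ_self _
    refine ⟨M, 0, fun n _ => ?_⟩
    have hsumIm : ((q n).roots.map fun ξ => |ξ.im|).sum ≤ 2*C := by
      have h1 : ((q n).roots.map fun ξ => |ξ.im|).sum
          ≤ ((q n).roots.map fun ξ => 2*(Real.pi - ang ξ a b)).sum := by
        apply Multiset.sum_map_le_sum_map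
        intro ξ hξ
        have := ang_le ξ a b ha ha1 hb0 hb (hroots n ξ hξ)
        linarith
      rw [Multiset.sum_map_mul_left] at h1
      have h2 := hang n
      linarith
    obtain ⟨g, hg⟩ : ∃ g : ℝ → ℂ, g = fun t : ℝ =>
        recipPoly (q n) ((a + t*(b-a) : ℝ):ℂ)
          / ((‖recipPoly (q n) ((a + t*(b-a) : ℝ):ℂ)‖:ℝ):ℂ) := ⟨_, rfl⟩
    have hmap : ∀ t : ℝ, t ∈ Icc (0:ℝ) 1 → (0 < a + t*(b-a) ∧ a + t*(b-a) ≤ b) := by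
      intro t ht
      constructor
      · nlinarith [mul_nonneg ht.1 (by linarith : (0:ℝ) ≤ b - a)]
      · nlinarith [mul_le_mul_of_nonneg_right ht.2 (by linarith : (0:ℝ) ≤ b - a)]
    have hglip : ∀ s t : ℝ, s ∈ Icc (0:ℝ) 1 → t ∈ Icc (0:ℝ) 1 →
        ‖g s - g t‖ ≤ L * |s - t| := by
      intro s t hs ht
      obtain ⟨hs0, hsb⟩ := hmap s hs
      obtain ⟨ht0, htb⟩ := hmap t ht
      have hlip := F_lip (q n) b (2*C) hb (hroots n) hsumIm
        (a + s*(b-a)) (a + t*(b-a)) hs0 hsb ht0 htb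
      rw [hg]
      refine hlip.trans ?_
      have he : |a + s*(b-a) - (a + t*(b-a))| = |s - t| * (b - a) := by
        rw [show a + s*(b-a) - (a + t*(b-a)) = (s-t)*(b-a) by ring, abs_mul,
          abs_of_pos (by linarith : (0:ℝ) < b - a)]
      rw [he, hLdef]
      have hk0 : (0:ℝ) ≤ 2/(1-b)^2*(2*C) := mul_nonneg (by positivity) (by linarith)
      have hk1 := mul_le_mul_of_nonneg_left hba1 (mul_nonneg hk0 (abs_nonneg (s-t)))
      nlinarith [hk1]
    obtain ⟨T, hTdeg, hTeval⟩ := exists_T g M hM0 a b hba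
    refine ⟨T, hTdeg, ?_⟩
    intro x hx
    have hbapos : (0:ℝ) < b - a := by linarith
    obtain ⟨t, htdef⟩ : ∃ t : ℝ, t = (x - a)/(b-a) := ⟨_, rfl⟩
    have hx0 : 0 ≤ t := htdef ▸ div_nonneg (by linarith [hx.1]) hbapos.le
    have hx1 : t ≤ 1 := by
      rw [htdef, div_le_one hbapos]; linarith [hx.2]
    have hxt : a + t*(b-a) = x := by
      rw [htdef]; field_simp; ring
    have hgt : g t = recipPoly (q n) ((x:ℝ):ℂ) / ((‖recipPoly (q n) ((x:ℝ):ℂ)‖:ℝ):ℂ) := by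
      simp only [hg, hxt]
    have hest := bernstein_est g L hL0 hglip M hM0 δ hδ t ⟨hx0, hx1⟩
    have hTx : Polynomial.eval ((x:ℝ):ℂ) T
        = ∑ k ∈ Finset.range (M+1), g ((k:ℝ)/M)
            * ((Polynomial.eval t (bernsteinPolynomial ℝ M k) : ℝ):ℂ) := by
      rw [hTeval x, htdef]
    rw [hTx, ← hgt, norm_sub_rev]
    refine lt_of_le_of_lt hest ?_
    have hA : L*(δ/2) ≤ ε/4 := by
      have e2 : (L+1)*(δ/2) = ε/4 := by
        rw [hδdef, div_div, show (2*(L+1)*2 : ℝ) = (L+1)*4 by ring, mul_div_assoc']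
        exact mul_div_mul_left ε 4 (ne_of_gt hL1)
      have h6 : L*(δ/2) ≤ (L+1)*(δ/2) :=
        mul_le_mul_of_nonneg_right (by linarith) (by positivity)
      linarith
    have hMR : (0:ℝ) < M := by exact_mod_cast hM0
    have hB : L*(1/(8*δ*M)) < ε/2 := by
      have h3 : L < 4*δ*ε*M := by
        rw [div_lt_iff₀ (by positivity : (0:ℝ) < 4*δ*ε)] at hMb
        linarith
      have e : L*(1/(8*δ*(M:ℝ))) = L/(8*δ*M) := by ring
      rw [e, div_lt_iff₀ (by positivity : (0:ℝ) < 8*δ*(M:ℝ))]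
      nlinarith
    calc L*(δ/2 + 1/(8*δ*M)) = L*(δ/2) + L*(1/(8*δ*M)) := by ring
      _ < ε := by linarith
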